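/- Let d > 0, r > 0, δ ∈ [0,1), R > 0, and set γ = 2√(r(1−δ)d) − δ. Suppose ω : [−R, R] → ℝ is twice continuously differentiable, ω ≥ 0, ω is not identically zero, ω(−R) = ω(R) = 0, and −d·ω''(x) − γ·ω'(x) = r·ω(x)·(1 − δ − ω(x)) for all x ∈ (−R, R). Then: (i) ω(x) < 1 − δ for every x ∈ [−R, R]; (ii) ω(x) > 0 for every x ∈ (−R, R); (iii) there exists a unique x* ∈ (−R, R) such that ω is strictly increasing on [−R, x*] and strictly decreasing on [x*, R] (so ω attains its maximum exactly at x*). -/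

import Mathlib

open Real Set

private lemma aux_anti {f f' : ℝ → ℝ} {a b : ℝ}
    (hf : ∀ x ∈ Set.Ioo a b, HasDerivAt f (f' x) x)
    (hc : ContinuousOn f (Set.Icc a b))
    (h0 : ∀ x ∈ Set.Ioo a b, f' x ≤ 0) : AntitoneOn f (Set.Icc a b) := by
  apply antitoneOn_of_deriv_nonpos (convex_Icc a b) hc
  · intro x hx; rw [interior_Icc] at hx
    exact (hf x hx).differentiableAt.differentiableWithinAt
  · intro x hx; rw [interior_Icc] at hx
    rw [(hf x hx).deriv]; exact h0 x hx

private lemma aux_mono {f f' : ℝ → ℝ} {a b : ℝ}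
    (hf : ∀ x ∈ Set.Ioo a b, HasDerivAt f (f' x) x)
    (hc : ContinuousOn f (Set.Icc a b))
    (h0 : ∀ x ∈ Set.Ioo a b, 0 ≤ f' x) : MonotoneOn f (Set.Icc a b) := by
  apply monotoneOn_of_deriv_nonneg (convex_Icc a b) hc
  · intro x hx; rw [interior_Icc] at hx
    exact (hf x hx).differentiableAt.differentiableWithinAt
  · intro x hx; rw [interior_Icc] at hx
    rw [(hf x hx).deriv]; exact h0 x hx

private lemma aux_smono {f f' : ℝ → ℝ} {a b : ℝ}
    (hf : ∀ x ∈ Set.Ioo a b, HasDerivAt f (f' x) x)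
    (hc : ContinuousOn f (Set.Icc a b))
    (h0 : ∀ x ∈ Set.Ioo a b, 0 < f' x) : StrictMonoOn f (Set.Icc a b) := by
  apply strictMonoOn_of_deriv_pos (convex_Icc a b) hc
  intro x hx; rw [interior_Icc] at hx
  rw [(hf x hx).deriv]; exact h0 x hx

private lemma aux_santi {f f' : ℝ → ℝ} {a b : ℝ}
    (hf : ∀ x ∈ Set.Ioo a b, HasDerivAt f (f' x) x)
    (hc : ContinuousOn f (Set.Icc a b))
    (h0 : ∀ x ∈ Set.Ioo a b, f' x < 0) : StrictAntiOn f (Set.Icc a b) := by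
  apply strictAntiOn_of_deriv_neg (convex_Icc a b) hc
  intro x hx; rw [interior_Icc] at hx
  rw [(hf x hx).deriv]; exact h0 x hx

private lemma aux_key {d r γ e a b m : ℝ} (hd : 0 < d) (hr : 0 < r)
    (hm0 : 0 ≤ m) (hm1 : m ≤ e) :
    -2*a*b - 2*γ*b^2/d - 2*r*m*a*b/d ≤ (1 + r*e/d + 2 * |γ|/d) * (a^2+b^2) := by
  rw [← mul_le_mul_iff_right₀ hd]
  have h1 : -2*d*a*b ≤ d*(a^2+b^2) := by nlinarith [sq_nonneg (a+b)]
  have h2 : -2*γ*b^2 ≤ 2 * |γ| * (a^2+b^2) := by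
    nlinarith [neg_abs_le γ, abs_nonneg γ, sq_nonneg a, sq_nonneg b]
  have h3 : -2*r*m*a*b ≤ r*e*(a^2+b^2) := by
    nlinarith [mul_nonneg (mul_nonneg hr.le hm0) (sq_nonneg (a+b)),
      mul_nonneg (mul_nonneg hr.le (sub_nonneg.mpr hm1)) (add_nonneg (sq_nonneg a) (sq_nonneg b))]
  have e1 : d * (-2*a*b - 2*γ*b^2/d - 2*r*m*a*b/d)
      = -2*d*a*b + (-2*γ*b^2) + (-2*r*m*a*b) := by field_simp; ring
  have e2 : d * ((1 + r*e/d + 2 * |γ|/d) * (a^2+b^2))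
      = d*(a^2+b^2) + r*e*(a^2+b^2) + 2 * |γ| * (a^2+b^2) := by field_simp
  rw [e1, e2]; linarith

/-- A nonnegative nonzero solution of the Dirichlet problem
`-dω'' - γω' = rω(1-δ-ω)` on `(-R,R)`, `ω(±R) = 0`, with `γ = 2√(r(1-δ)d) - δ`,
satisfies `ω < 1-δ`, is positive on `(-R,R)`, and is increasing then decreasing,
attaining its maximum at a unique interior point. -/
theorem omega_shape
    (d r δ R γ : ℝ) (hd : 0 < d) (hr : 0 < r)
    (hδ0 : 0 ≤ δ) (hδ1 : δ < 1) (hR : 0 < R)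
    (hγ : γ = 2 * Real.sqrt (r * (1 - δ) * d) - δ)
    (ω ω' ω'' : ℝ → ℝ)
    (hω1 : ∀ x ∈ Set.Icc (-R) R, HasDerivWithinAt ω (ω' x) (Set.Icc (-R) R) x)
    (hω2 : ∀ x ∈ Set.Icc (-R) R, HasDerivWithinAt ω' (ω'' x) (Set.Icc (-R) R) x)
    (hω''c : ContinuousOn ω'' (Set.Icc (-R) R))
    (hnonneg : ∀ x ∈ Set.Icc (-R) R, 0 ≤ ω x)
    (hne : ∃ x ∈ Set.Icc (-R) R, ω x ≠ 0)
    (hbdl : ω (-R) = 0) (hbdr : ω R = 0)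
    (hode : ∀ x ∈ Set.Ioo (-R) R, -d * ω'' x - γ * ω' x = r * ω x * (1 - δ - ω x)) :
    (∀ x ∈ Set.Icc (-R) R, ω x < 1 - δ) ∧
    (∀ x ∈ Set.Ioo (-R) R, 0 < ω x) ∧
    (∃! xstar, xstar ∈ Set.Ioo (-R) R ∧
      StrictMonoOn ω (Set.Icc (-R) xstar) ∧ StrictAntiOn ω (Set.Icc xstar R)) := by
  have hRR : -R < R := by linarith
  have hIoo : ∀ x ∈ Set.Ioo (-R) R, Set.Icc (-R) R ∈ nhds x :=
    fun x hx => Icc_mem_nhds hx.1 hx.2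
  have hω1' : ∀ x ∈ Set.Ioo (-R) R, HasDerivAt ω (ω' x) x :=
    fun x hx => (hω1 x (Ioo_subset_Icc_self hx)).hasDerivAt (hIoo x hx)
  have hω2' : ∀ x ∈ Set.Ioo (-R) R, HasDerivAt ω' (ω'' x) x :=
    fun x hx => (hω2 x (Ioo_subset_Icc_self hx)).hasDerivAt (hIoo x hx)
  have hωc : ContinuousOn ω (Set.Icc (-R) R) :=
    fun x hx => (hω1 x hx).continuousWithinAt
  have hω'c : ContinuousOn ω' (Set.Icc (-R) R) :=
    fun x hx => (hω2 x hx).continuousWithinAt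
  -- maximum point
  obtain ⟨x0, hx0mem, hx0max⟩ := (isCompact_Icc : IsCompact (Set.Icc (-R) R)).exists_isMaxOn
    (nonempty_Icc.mpr hRR.le) hωc
  obtain ⟨z, hz, hzne⟩ := hne
  have hM : 0 < ω x0 := lt_of_lt_of_le (lt_of_le_of_ne (hnonneg z hz) (Ne.symm hzne)) (hx0max hz)
  have hx0int : x0 ∈ Set.Ioo (-R) R := by
    rcases hx0mem with ⟨h1, h2⟩
    constructor
    · rcases h1.lt_or_eq with h | h
      · exact h
      · exfalso; rw [← h, hbdl] at hM; exact lt_irrefl 0 hM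
    · rcases h2.lt_or_eq with h | h
      · exact h
      · exfalso; rw [h, hbdr] at hM; exact lt_irrefl 0 hM
  have hω'x0 : ω' x0 = 0 :=
    (hx0max.isLocalMax (hIoo x0 hx0int)).hasDerivAt_eq_zero (hω1' x0 hx0int)
  have hodeSolve : ∀ x ∈ Set.Ioo (-R) R,
      ω'' x = (-(γ * ω' x) - r * ω x * (1 - δ - ω x)) / d := by
    intro x hx
    have hode' := hode x hx
    field_simp; linarith
  -- Part (i)
  have part1 : ∀ x ∈ Set.Icc (-R) R, ω x < 1 - δ := by
    by_contra hcon
    push_neg at hcon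
    obtain ⟨x2, hx2mem, hx2ge⟩ := hcon
    have hge : 1 - δ ≤ ω x0 := hx2ge.trans (hx0max hx2mem)
    rcases hge.lt_or_eq with hgt | heq
    -- Case A : max > 1 - δ
    · have hd2 : 0 < ω'' x0 := by
        have h := hode x0 hx0int
        rw [hω'x0] at h
        nlinarith [mul_pos (mul_pos hr hM) (by linarith : (0:ℝ) < ω x0 - (1 - δ))]
      have hcont : ContinuousAt ω'' x0 := hω''c.continuousAt (hIoo x0 hx0int)
      have hEv : ω'' ⁻¹' Set.Ioi 0 ∈ nhds x0 := hcont (Ioi_mem_nhds hd2)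
      have hset : (ω'' ⁻¹' Set.Ioi 0) ∩ Set.Ioo (-R) R ∈ nhds x0 :=
        Filter.inter_mem hEv (Ioo_mem_nhds hx0int.1 hx0int.2)
      obtain ⟨ε, hε, hball⟩ := Metric.mem_nhds_iff.mp hset
      set b : ℝ := x0 + ε/2 with hb
      have hx0b : x0 < b := by simp only [hb]; linarith
      have hsub : Set.Icc x0 b ⊆ (ω'' ⁻¹' Set.Ioi 0) ∩ Set.Ioo (-R) R := by
        intro y hy
        apply hball
        rw [Real.ball_eq_Ioo]
        constructor
        · linarith [hy.1]
        · have := hy.2; simp only [hb] at this; linarith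
      have hsub2 : Set.Icc x0 b ⊆ Set.Icc (-R) R :=
        fun y hy => Ioo_subset_Icc_self (hsub hy).2
      have hmono' : StrictMonoOn ω' (Set.Icc x0 b) := by
        apply aux_smono (f' := ω'')
        · exact fun x hx => hω2' x (hsub (Ioo_subset_Icc_self hx)).2
        · exact hω'c.mono hsub2
        · exact fun x hx => (hsub (Ioo_subset_Icc_self hx)).1
      have hmono2 : StrictMonoOn ω (Set.Icc x0 b) := by
        apply aux_smono (f' := ω')
        · exact fun x hx => hω1' x (hsub (Ioo_subset_Icc_self hx)).2
        · exact hωc.mono hsub2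
        · intro x hx
          have := hmono' (left_mem_Icc.mpr hx0b.le) (Ioo_subset_Icc_self hx) hx.1
          rwa [hω'x0] at this
      have hlt : ω x0 < ω b :=
        hmono2 (left_mem_Icc.mpr hx0b.le) (right_mem_Icc.mpr hx0b.le) hx0b
      exact absurd (hx0max (hsub2 (right_mem_Icc.mpr hx0b.le))) (not_le.mpr hlt)
    -- Case B : max = 1 - δ  (Gronwall)
    · have hub : ∀ x ∈ Set.Icc (-R) R, ω x ≤ 1 - δ :=
        fun x hx => le_of_le_of_eq (hx0max hx) heq.symm
      set C : ℝ := 1 + r*(1-δ)/d + 2 * |γ|/d with hC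
      set v : ℝ → ℝ := fun x => (1-δ-ω x)^2 + (ω' x)^2 with hv
      set v' : ℝ → ℝ := fun x => 2*(1-δ-ω x)*(-ω' x) + 2*(ω' x)*(ω'' x) with hv'
      have hvd : ∀ x ∈ Set.Ioo (-R) R, HasDerivAt v (v' x) x := by
        intro x hx
        have h1 : HasDerivAt (fun y => (1-δ-ω y)) (-ω' x) x := by
          simpa using (hω1' x hx).const_sub (1-δ)
        have h2 := (h1.pow 2).add ((hω2' x hx).pow 2)
        convert h2 using 1
        rotate_left 3
        simp only [hv']
        ring
        all_goals rfl
      have hvc : ContinuousOn v (Set.Icc (-R) R) :=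
        ((continuousOn_const.sub hωc).pow 2).add (hω'c.pow 2)
      set g : ℝ → ℝ := fun x => Real.exp (-C*x) * v x with hg
      set g' : ℝ → ℝ := fun x => Real.exp (-C*x) * (-C) * v x + Real.exp (-C*x) * v' x with hg'
      have hgd : ∀ x ∈ Set.Ioo (-R) R, HasDerivAt g (g' x) x := by
        intro x hx
        have h1 : HasDerivAt (fun y : ℝ => Real.exp (-C * y)) (Real.exp (-C * x) * (-C)) x := by
          simpa using ((hasDerivAt_id x).const_mul (-C)).exp
        exact h1.mul (hvd x hx)
      have hgc : ContinuousOn g (Set.Icc (-R) R) :=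
        ((Real.continuous_exp.comp (continuous_const.mul continuous_id)).continuousOn).mul hvc
      have hkey : ∀ x ∈ Set.Ioo (-R) R, v' x ≤ C * v x := by
        intro x hx
        have hm0 : 0 ≤ ω x := hnonneg x (Ioo_subset_Icc_self hx)
        have hm1 : ω x ≤ 1 - δ := hub x (Ioo_subset_Icc_self hx)
        have hk := aux_key (γ := γ) (a := 1-δ-ω x) (b := ω' x) hd hr hm0 hm1
        have hrw : v' x = -2*(1-δ-ω x)*(ω' x) - 2*γ*(ω' x)^2/d - 2*r*(ω x)*(1-δ-ω x)*(ω' x)/d := by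
          simp only [hv']
          rw [hodeSolve x hx]
          field_simp
          ring
        rw [hrw]
        calc -2*(1-δ-ω x)*(ω' x) - 2*γ*(ω' x)^2/d - 2*r*(ω x)*(1-δ-ω x)*(ω' x)/d
            = -2*(1-δ-ω x)*(ω' x) - 2*γ*(ω' x)^2/d - 2*r*(ω x)*((1-δ-ω x)*(ω' x))/d := by ring
          _ ≤ (1 + r*(1-δ)/d + 2 * |γ|/d) * ((1-δ-ω x)^2+(ω' x)^2) := by
              convert hk using 2 <;> ring
          _ = C * v x := by simp only [hC, hv]
      have hganti : AntitoneOn g (Set.Icc x0 R) := by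
        apply aux_anti (f' := g')
        · exact fun x hx => hgd x ⟨hx0int.1.trans hx.1, hx.2⟩
        · exact hgc.mono (Icc_subset_Icc_left hx0mem.1)
        · intro x hx
          have hx' : x ∈ Set.Ioo (-R) R := ⟨hx0int.1.trans hx.1, hx.2⟩
          have h1 := hkey x hx'
          have h2 : 0 < Real.exp (-C*x) := Real.exp_pos _
          simp only [hg']
          nlinarith
      have hgx0 : g x0 = 0 := by
        simp only [hg, hv, hω'x0, ← heq]
        ring
      have hgR : g R ≤ 0 := by
        have := hganti (left_mem_Icc.mpr hx0mem.2) (right_mem_Icc.mpr hx0mem.2)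
          hx0mem.2
        rwa [hgx0] at this
      have hvR : (1-δ)^2 ≤ v R := by
        simp only [hv, hbdr]
        nlinarith [sq_nonneg (ω' R)]
      have h2 : 0 < Real.exp (-C*R) := Real.exp_pos _
      simp only [hg] at hgR
      nlinarith [sq_nonneg (1-δ), h2, hvR, mul_pos h2 (lt_of_lt_of_le (by nlinarith : (0:ℝ) < (1-δ)^2) hvR)]
  -- the weight function w
  set c : ℝ := γ / d with hc
  set w : ℝ → ℝ := fun x => Real.exp (c * x) * ω' x with hw
  set w' : ℝ → ℝ := fun x => Real.exp (c * x) * (-(r/d) * (ω x * (1 - δ - ω x))) with hw'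
  have hwc : ContinuousOn w (Set.Icc (-R) R) :=
    ((Real.continuous_exp.comp (continuous_const.mul continuous_id)).continuousOn).mul hω'c
  have hwderiv : ∀ x ∈ Set.Ioo (-R) R, HasDerivAt w (w' x) x := by
    intro x hx
    have h1 : HasDerivAt (fun y : ℝ => Real.exp (c * y)) (Real.exp (c * x) * c) x := by
      simpa using ((hasDerivAt_id x).const_mul c).exp
    have h2 := h1.mul (hω2' x hx)
    convert h2 using 1
    rotate_left 3
    simp only [hw']
    rw [hodeSolve x hx, hc]
    field_simp
    ring
    all_goals rfl
  -- Part (ii)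
  have part2 : ∀ x ∈ Set.Ioo (-R) R, 0 < ω x := by
    by_contra hcon
    push_neg at hcon
    obtain ⟨x1, hx1, hx1le⟩ := hcon
    have hx1eq : ω x1 = 0 := le_antisymm hx1le (hnonneg x1 (Ioo_subset_Icc_self hx1))
    have hmin : IsLocalMin ω x1 := by
      apply Filter.eventually_of_mem (hIoo x1 hx1)
      intro y hy
      rw [hx1eq]
      exact hnonneg y hy
    have hω'x1 : ω' x1 = 0 := hmin.hasDerivAt_eq_zero (hω1' x1 hx1)
    have hwx1 : w x1 = 0 := by simp [hw, hω'x1]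
    have hwanti : AntitoneOn w (Set.Icc (-R) R) := by
      apply aux_anti (f' := w') hwderiv hwc
      intro x hx
      have h1 : 0 < Real.exp (c*x) := Real.exp_pos _
      have h2 : 0 ≤ ω x := hnonneg x (Ioo_subset_Icc_self hx)
      have h3 : ω x < 1 - δ := part1 x (Ioo_subset_Icc_self hx)
      have h4 : 0 < r / d := div_pos hr hd
      simp only [hw']
      nlinarith [mul_nonneg (mul_nonneg h1.le h4.le) (mul_nonneg h2 (by linarith : (0:ℝ) ≤ 1 - δ - ω x))]
    rcases le_total z x1 with hzx | hzx
    · have hmonoL : MonotoneOn ω (Set.Icc (-R) x1) := by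
        apply aux_mono (f' := ω')
        · exact fun x hx => hω1' x ⟨hx.1, hx.2.trans hx1.2⟩
        · exact hωc.mono (Icc_subset_Icc_right hx1.2.le)
        · intro x hx
          have hxI : x ∈ Set.Icc (-R) R := ⟨hx.1.le, hx.2.le.trans hx1.2.le⟩
          have := hwanti hxI (Ioo_subset_Icc_self hx1) hx.2.le
          rw [hwx1] at this
          have h1 : 0 < Real.exp (c*x) := Real.exp_pos _
          simp only [hw] at this
          nlinarith
      have : ω z ≤ ω x1 := hmonoL ⟨hz.1, hzx⟩ ⟨hx1.1.le, le_refl _⟩ hzx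
      exact hzne (le_antisymm (by rwa [hx1eq] at this) (hnonneg z hz))
    · have hantiR : AntitoneOn ω (Set.Icc x1 R) := by
        apply aux_anti (f' := ω')
        · exact fun x hx => hω1' x ⟨hx1.1.trans hx.1, hx.2⟩
        · exact hωc.mono (Icc_subset_Icc_left hx1.1.le)
        · intro x hx
          have hxI : x ∈ Set.Icc (-R) R := ⟨hx1.1.le.trans hx.1.le, hx.2.le⟩
          have := hwanti (Ioo_subset_Icc_self hx1) hxI hx.1.le
          rw [hwx1] at this
          have h1 : 0 < Real.exp (c*x) := Real.exp_pos _
          simp only [hw] at this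
          nlinarith
      have : ω z ≤ ω x1 := hantiR ⟨le_refl _, hx1.2.le⟩ ⟨hzx, hz.2⟩ hzx
      exact hzne (le_antisymm (by rwa [hx1eq] at this) (hnonneg z hz))
  refine ⟨part1, part2, ?_⟩
  -- Part (iii)
  have hwsanti : StrictAntiOn w (Set.Icc (-R) R) := by
    apply aux_santi (f' := w') hwderiv hwc
    intro x hx
    have h1 : 0 < Real.exp (c*x) := Real.exp_pos _
    have h2 : 0 < ω x := part2 x hx
    have h3 : ω x < 1 - δ := part1 x (Ioo_subset_Icc_self hx)
    have h4 : 0 < r / d := div_pos hr hd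
    simp only [hw']
    nlinarith [mul_pos (mul_pos h1 h4) (mul_pos h2 (by linarith : (0:ℝ) < 1 - δ - ω x))]
  have hwx0 : w x0 = 0 := by simp [hw, hω'x0]
  have hmono : StrictMonoOn ω (Set.Icc (-R) x0) := by
    apply aux_smono (f' := ω')
    · exact fun x hx => hω1' x ⟨hx.1, hx.2.trans hx0int.2⟩
    · exact hωc.mono (Icc_subset_Icc_right hx0mem.2)
    · intro x hx
      have hxI : x ∈ Set.Icc (-R) R := ⟨hx.1.le, hx.2.le.trans hx0mem.2⟩
      have := hwsanti hxI (Ioo_subset_Icc_self hx0int) hx.2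
      rw [hwx0] at this
      have h1 : 0 < Real.exp (c*x) := Real.exp_pos _
      simp only [hw] at this
      nlinarith
  have hanti : StrictAntiOn ω (Set.Icc x0 R) := by
    apply aux_santi (f' := ω')
    · exact fun x hx => hω1' x ⟨hx0int.1.trans hx.1, hx.2⟩
    · exact hωc.mono (Icc_subset_Icc_left hx0mem.1)
    · intro x hx
      have hxI : x ∈ Set.Icc (-R) R := ⟨hx0mem.1.trans hx.1.le, hx.2.le⟩
      have := hwsanti (Ioo_subset_Icc_self hx0int) hxI hx.1
      rw [hwx0] at this
      have h1 : 0 < Real.exp (c*x) := Real.exp_pos _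
      simp only [hw] at this
      nlinarith
  refine ⟨x0, ⟨hx0int, hmono, hanti⟩, ?_⟩
  rintro y ⟨hyint, hym, hya⟩
  have hymax : IsMaxOn ω (Set.Icc (-R) R) y := by
    intro x hx
    rcases lt_trichotomy x y with h | h | h
    · exact (hym ⟨hx.1, h.le⟩ ⟨hyint.1.le, le_refl y⟩ h).le
    · show ω x ≤ ω y
      rw [h]
    · exact (hya ⟨le_refl y, hyint.2.le⟩ ⟨h.le, hx.2⟩ h).le
  have hω'y : ω' y = 0 :=
    (hymax.isLocalMax (hIoo y hyint)).hasDerivAt_eq_zero (hω1' y hyint)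
  have hwy : w y = w x0 := by simp [hw, hω'y, hω'x0]
  exact hwsanti.injOn (Ioo_subset_Icc_self hyint) (Ioo_subset_Icc_self hx0int) hwy
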